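/- For any instance with two groups of agents of sizes 3 and 2, where all five agents have binary valuations over a finite set G of goods, there exists an allocation (B₁, B₂) of G to the two groups that is EF1 for every agent. -/

import Mathlib

open Finset

variable {γ : Type*} [DecidableEq γ]

/-- An allocation is EF1 for an agent with valuation `u` whose group receives `mine`,
the other group receiving `other`. -/
def EF1 (u : Finset γ → ℝ) (mine other : Finset γ) : Prop :=
  ∃ B ⊆ other, B.card ≤ 1 ∧ u (other \ B) ≤ u mine

/-- A valuation is additive if the value of a set is the sum of values of its singletons. -/
def AdditiveVal (u : Finset γ → ℝ) : Prop :=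
  ∀ S : Finset γ, u S = ∑ g ∈ S, u {g}

/-- A valuation is binary if it is additive and each good has value 0 or 1. -/
def Binary (u : Finset γ → ℝ) : Prop :=
  AdditiveVal u ∧ ∀ g : γ, u {g} = 0 ∨ u {g} = 1

namespace BinEF1

def bitw (i t : ℕ) : ℤ := if t.testBit i then 1 else 0

def dleq (a b : ℕ) : Bool :=
  (((a &&& 7) ||| (b &&& 7)) == (b &&& 7)) && (((b &&& 24) ||| (a &&& 24)) == (a &&& 24))

def solv : List ℕ → ℤ → ℤ → ℤ → ℤ → ℤ → Bool
  | [], d1, d2, d3, e1, e2 =>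
      decide (-1 ≤ d1) && decide (-1 ≤ d2) && decide (-1 ≤ d3) &&
      decide (e1 ≤ 1) && decide (e2 ≤ 1)
  | t :: l, d1, d2, d3, e1, e2 =>
      solv l (d1 + bitw 0 t) (d2 + bitw 1 t) (d3 + bitw 2 t) (e1 + bitw 3 t) (e2 + bitw 4 t)
      || solv l (d1 - bitw 0 t) (d2 - bitw 1 t) (d3 - bitw 2 t) (e1 - bitw 3 t) (e2 - bitw 4 t)

def compat (t : ℕ) (cur : List ℕ) : Bool := cur.all (fun u => !dleq t u && !dleq u t)

def aux : List ℕ → List ℕ → Bool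
  | [], cur => solv cur 0 0 0 0 0
  | t :: rest, cur => aux rest cur && (!compat t cur || aux rest (t :: cur))

def L21 : List ℕ := [9, 10, 11, 12, 13, 14, 15, 17, 18, 19, 20, 21, 22, 23, 25, 26, 27, 28, 29, 30, 31]

def SL (j : ℕ) (l : List ℕ) : ℤ := (l.map (bitw j)).sum

def SemP (l : List ℕ) : Prop := ∃ P M : List ℕ, (P ++ M).Perm l ∧
  -1 ≤ SL 0 P - SL 0 M ∧ -1 ≤ SL 1 P - SL 1 M ∧ -1 ≤ SL 2 P - SL 2 M ∧
  SL 3 P - SL 3 M ≤ 1 ∧ SL 4 P - SL 4 M ≤ 1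

def incomp (a b : ℕ) : Prop := dleq a b = false ∧ dleq b a = false

theorem incomp_symm : Symmetric incomp := fun _ _ h => ⟨h.2, h.1⟩

@[simp] theorem SL_nil (j : ℕ) : SL j [] = 0 := rfl
@[simp] theorem SL_cons (j t : ℕ) (l : List ℕ) : SL j (t :: l) = bitw j t + SL j l := by
  simp [SL]

theorem SemP_perm {l l' : List ℕ} (h : l.Perm l') (hs : SemP l) : SemP l' := by
  obtain ⟨P, M, hp, hc⟩ := hs
  exact ⟨P, M, hp.trans h, hc⟩

theorem solv_sound : ∀ (l : List ℕ) (d1 d2 d3 e1 e2 : ℤ), solv l d1 d2 d3 e1 e2 = true →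
    ∃ P M : List ℕ, (P ++ M).Perm l ∧
      -1 ≤ d1 + (SL 0 P - SL 0 M) ∧ -1 ≤ d2 + (SL 1 P - SL 1 M) ∧ -1 ≤ d3 + (SL 2 P - SL 2 M) ∧
      e1 + (SL 3 P - SL 3 M) ≤ 1 ∧ e2 + (SL 4 P - SL 4 M) ≤ 1
  | [], d1, d2, d3, e1, e2, h => by
      simp only [solv, Bool.and_eq_true, decide_eq_true_eq] at h
      exact ⟨[], [], by simp, by simpa using h.1.1.1.1, by simpa using h.1.1.1.2,
        by simpa using h.1.1.2, by simpa using h.1.2, by simpa using h.2⟩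
  | t :: l, d1, d2, d3, e1, e2, h => by
      rw [solv, Bool.or_eq_true] at h
      rcases h with h | h
      · obtain ⟨P, M, hp, c1, c2, c3, c4, c5⟩ := solv_sound l _ _ _ _ _ h
        refine ⟨t :: P, M, ?_, ?_, ?_, ?_, ?_, ?_⟩
        · exact hp.cons t
        all_goals simp only [SL_cons]; linarith
      · obtain ⟨P, M, hp, c1, c2, c3, c4, c5⟩ := solv_sound l _ _ _ _ _ h
        refine ⟨P, t :: M, ?_, ?_, ?_, ?_, ?_, ?_⟩
        · exact List.perm_middle.trans (hp.cons t)
        all_goals simp only [SL_cons]; linarith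

theorem aux_sound : ∀ (rest cur : List ℕ), aux rest cur = true →
    ∀ S : List ℕ, S.Sublist rest → (S ++ cur).Pairwise incomp → SemP (S ++ cur)
  | [], cur, h, S, hS, _ => by
      rw [List.sublist_nil.mp hS]
      obtain ⟨P, M, hp, c1, c2, c3, c4, c5⟩ := solv_sound cur 0 0 0 0 0 h
      exact ⟨P, M, by simpa using hp, by linarith, by linarith, by linarith,
        by linarith, by linarith⟩
  | t :: rs, cur, h, S, hS, hPW => by
      rw [aux, Bool.and_eq_true] at h
      obtain ⟨h1, h2⟩ := h
      cases hS with
      | cons _ hS' => exact aux_sound rs cur h1 S hS' hPW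
      | @cons_cons S' _ _ hS' =>
        have hPW' : (t :: (S' ++ cur)).Pairwise incomp := hPW
        obtain ⟨hhead, htail⟩ := List.pairwise_cons.mp hPW'
        have hcompat : compat t cur = true := by
          rw [compat, List.all_eq_true]
          intro u hu
          obtain ⟨e1, e2⟩ := hhead u (List.mem_append_right S' hu)
          rw [e1, e2]; rfl
        rw [Bool.or_eq_true, Bool.not_eq_true', hcompat] at h2
        rcases h2 with h2 | h2
        · exact absurd h2 (by simp)
        · have hperm : (S' ++ t :: cur).Perm (t :: (S' ++ cur)) := List.perm_middle
          have hPW'' : (S' ++ t :: cur).Pairwise incomp :=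
            (hperm.pairwise_iff (fun h => ⟨h.2, h.1⟩)).mpr hPW'
          have := aux_sound rs (t :: cur) h2 S' hS' hPW''
          exact SemP_perm hperm this

-- decide lemmas
theorem bitw_nonneg (i t : ℕ) : 0 ≤ bitw i t := by
  unfold bitw; split <;> simp

theorem bitw_01 (i t : ℕ) : bitw i t = 0 ∨ bitw i t = 1 := by
  unfold bitw; split <;> simp

theorem dleq_refl (a : ℕ) : dleq a a = true := by
  simp [dleq]

theorem e_zero_bits : ∀ t, t < 32 → t &&& 24 = 0 → bitw 3 t = 0 ∧ bitw 4 t = 0 := by decide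

theorem d_zero_bits : ∀ t, t < 32 → t &&& 7 = 0 →
    bitw 0 t = 0 ∧ bitw 1 t = 0 ∧ bitw 2 t = 0 := by decide

theorem dleq_bits : ∀ t, t < 32 → ∀ u, u < 32 → dleq u t = true →
    bitw 0 u ≤ bitw 0 t ∧ bitw 1 u ≤ bitw 1 t ∧ bitw 2 u ≤ bitw 2 t ∧
    bitw 3 t ≤ bitw 3 u ∧ bitw 4 t ≤ bitw 4 u := by decide

theorem mem_L21 : ∀ t, t < 32 → t &&& 7 ≠ 0 → t &&& 24 ≠ 0 → t ∈ L21 := by decide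

-- pairwise helper
theorem pairwise_of_forall_erase {α : Type*} [DecidableEq α] (Q : α → α → Prop) :
    ∀ l : List α, (∀ t ∈ l, ∀ u ∈ l.erase t, Q t u) →
      l.Pairwise (fun a b => Q a b ∧ Q b a)
  | [], _ => List.Pairwise.nil
  | a :: l, h => by
      refine List.Pairwise.cons ?_ (pairwise_of_forall_erase Q l ?_)
      · intro b hb
        constructor
        · have := h a (List.mem_cons_self (a := a) (l := l)) b
          rw [List.erase_cons_head] at this
          exact this hb
        · by_cases hba : b = a
          · subst hba
            have := h b (List.mem_cons_self (a := b) (l := l)) b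
            rw [List.erase_cons_head] at this
            exact this hb
          · refine h b (List.mem_cons_of_mem a hb) a ?_
            rw [List.erase_cons_tail]
            · exact List.mem_cons_self (a := a)
            · simp only [beq_iff_eq]; exact Ne.symm hba
      · intro t ht u hu
        refine h t (List.mem_cons_of_mem a ht) u ?_
        by_cases hta : t = a
        · subst hta
          rw [List.erase_cons_head]
          exact List.mem_of_mem_erase hu
        · rw [List.erase_cons_tail]
          · exact List.mem_cons_of_mem a hu
          · simp only [beq_iff_eq]; exact Ne.symm hta

-- lifting partitions of mapped lists
theorem lift {α : Type*} (c : α → ℕ) :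
    ∀ (l : List α) (P M : List ℕ), (P ++ M).Perm (l.map c) →
      ∃ A B : List α, (A ++ B).Perm l ∧ (A.map c).Perm P ∧ (B.map c).Perm M
  | [], P, M, h => by
      have h0 : P ++ M = [] := List.Perm.eq_nil (by simpa using h)
      obtain ⟨hP, hM⟩ := List.append_eq_nil_iff.mp h0
      subst hP; subst hM
      exact ⟨[], [], by simp, by simp, by simp⟩
  | a :: l, P, M, h => by
      have hmem : c a ∈ P ++ M := h.symm.subset (by simp)
      rcases List.mem_append.mp hmem with hP | hM
      · have hP2 : P.Perm (c a :: P.erase (c a)) := List.perm_cons_erase hP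
        have key : (c a :: (P.erase (c a) ++ M)).Perm (c a :: l.map c) := by
          have h3 : ((c a :: P.erase (c a)) ++ M).Perm ((a :: l).map c) :=
            ((hP2.symm).append_right M).trans h
          simpa using h3
        have h' := key.cons_inv
        obtain ⟨A, B, hab, ha, hb⟩ := lift c l (P.erase (c a)) M h'
        exact ⟨a :: A, B, hab.cons a, (ha.cons (c a)).trans hP2.symm, hb⟩
      · have hM2 : M.Perm (c a :: M.erase (c a)) := List.perm_cons_erase hM
        have key : (c a :: (P ++ M.erase (c a))).Perm (c a :: l.map c) := by
          have h3 : (P ++ (c a :: M.erase (c a))).Perm ((a :: l).map c) :=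
            (List.Perm.append_left P hM2.symm).trans h
          have h4 := (List.perm_middle.symm).trans h3
          simpa using h4
        have h' := key.cons_inv
        obtain ⟨A, B, hab, ha, hb⟩ := lift c l P (M.erase (c a)) h'
        refine ⟨A, a :: B, ?_, ha, (hb.cons (c a)).trans hM2.symm⟩
        exact List.perm_middle.trans (hab.cons a)


set_option maxHeartbeats 4000000 in
theorem aux_true : aux L21 [] = true := by decide

theorem incomp_ne {a b : ℕ} (h : incomp a b) : a ≠ b := by
  rintro rfl
  have := h.1
  rw [dleq_refl a] at this
  exact absurd this (by simp)

def SC {α : Type*} (c : α → ℕ) (j : ℕ) (X : List α) : ℤ := (X.map fun a => bitw j (c a)).sum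

@[simp] theorem SC_nil {α : Type*} (c : α → ℕ) (j : ℕ) : SC c j [] = 0 := rfl
@[simp] theorem SC_cons {α : Type*} (c : α → ℕ) (j : ℕ) (t : α) (X : List α) :
    SC c j (t :: X) = bitw j (c t) + SC c j X := by simp [SC]

theorem SC_eq_SL {α : Type*} (c : α → ℕ) (j : ℕ) (X : List α) : SC c j X = SL j (X.map c) := by
  simp only [SC, SL, List.map_map]
  rfl

theorem main {α : Type*} [DecidableEq α] (c : α → ℕ) :
    ∀ (n : ℕ) (l : List α), l.length ≤ n → (∀ a ∈ l, c a < 32) →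
    ∃ A B : List α, (A ++ B).Perm l ∧
      -1 ≤ SC c 0 A - SC c 0 B ∧ -1 ≤ SC c 1 A - SC c 1 B ∧ -1 ≤ SC c 2 A - SC c 2 B ∧
      SC c 3 A - SC c 3 B ≤ 1 ∧ SC c 4 A - SC c 4 B ≤ 1 := by
  intro n
  induction n with
  | zero =>
    intro l hl _
    rw [Nat.le_zero, List.length_eq_zero_iff] at hl
    subst hl
    exact ⟨[], [], by simp, by simp, by simp, by simp, by simp, by simp⟩
  | succ n IH =>
    intro l hl hlt
    by_cases h1 : ∃ t ∈ l, c t &&& 24 = 0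
    · obtain ⟨t, ht, hmask⟩ := h1
      have hp1 : l.Perm (t :: l.erase t) := List.perm_cons_erase ht
      have hlen : (l.erase t).length ≤ n := by
        have := List.length_erase_of_mem ht
        have := List.length_pos_of_mem ht
        omega
      obtain ⟨A, B, hab, c1, c2, c3, c4, c5⟩ :=
        IH (l.erase t) hlen (fun a ha => hlt a (List.mem_of_mem_erase ha))
      obtain ⟨hz3, hz4⟩ := e_zero_bits (c t) (hlt t ht) hmask
      refine ⟨t :: A, B, ?_, ?_, ?_, ?_, ?_, ?_⟩
      · exact (hab.cons t).trans hp1.symm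
      all_goals simp only [SC_cons]
      · have := bitw_nonneg 0 (c t); linarith
      · have := bitw_nonneg 1 (c t); linarith
      · have := bitw_nonneg 2 (c t); linarith
      · rw [hz3]; linarith
      · rw [hz4]; linarith
    by_cases h2 : ∃ t ∈ l, c t &&& 7 = 0
    · obtain ⟨t, ht, hmask⟩ := h2
      have hp1 : l.Perm (t :: l.erase t) := List.perm_cons_erase ht
      have hlen : (l.erase t).length ≤ n := by
        have := List.length_erase_of_mem ht
        have := List.length_pos_of_mem ht
        omega
      obtain ⟨A, B, hab, c1, c2, c3, c4, c5⟩ :=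
        IH (l.erase t) hlen (fun a ha => hlt a (List.mem_of_mem_erase ha))
      obtain ⟨hz0, hz1, hz2⟩ := d_zero_bits (c t) (hlt t ht) hmask
      refine ⟨A, t :: B, ?_, ?_, ?_, ?_, ?_, ?_⟩
      · exact (List.perm_middle.trans (hab.cons t)).trans hp1.symm
      all_goals simp only [SC_cons]
      · rw [hz0]; linarith
      · rw [hz1]; linarith
      · rw [hz2]; linarith
      · have := bitw_nonneg 3 (c t); linarith
      · have := bitw_nonneg 4 (c t); linarith
    by_cases h3 : ∃ t ∈ l, ∃ u ∈ l.erase t, dleq (c u) (c t) = true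
    · obtain ⟨t, ht, u, hu, hle⟩ := h3
      have hp1 : l.Perm (t :: l.erase t) := List.perm_cons_erase ht
      have hp2 : (l.erase t).Perm (u :: (l.erase t).erase u) := List.perm_cons_erase hu
      have hlen : ((l.erase t).erase u).length ≤ n := by
        have e1 := List.length_erase_of_mem ht
        have e2 := List.length_erase_of_mem hu
        have := List.length_pos_of_mem ht
        have := List.length_pos_of_mem hu
        omega
      obtain ⟨A, B, hab, c1, c2, c3, c4, c5⟩ :=
        IH ((l.erase t).erase u) hlen
          (fun a ha => hlt a (List.mem_of_mem_erase (List.mem_of_mem_erase ha)))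
      obtain ⟨b0, b1, b2, b3, b4⟩ :=
        dleq_bits (c t) (hlt t ht) (c u) (hlt u (List.mem_of_mem_erase hu)) hle
      refine ⟨t :: A, u :: B, ?_, ?_, ?_, ?_, ?_, ?_⟩
      · have : (A ++ u :: B).Perm (l.erase t) :=
          (List.perm_middle.trans (hab.cons u)).trans hp2.symm
        exact (this.cons t).trans hp1.symm
      all_goals simp only [SC_cons]
      · linarith
      · linarith
      · linarith
      · linarith
      · linarith
    · push_neg at h1 h2 h3
      have hQ : l.Pairwise (fun a b =>
          (dleq (c b) (c a) = false) ∧ (dleq (c a) (c b) = false)) := by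
        refine pairwise_of_forall_erase _ l ?_
        intro t ht u hu
        exact Bool.not_eq_true _ ▸ (h3 t ht u hu)
      have PK : (l.map c).Pairwise incomp := by
        rw [List.pairwise_map]
        exact hQ.imp fun h => ⟨h.2, h.1⟩
      have ND : (l.map c).Nodup := PK.imp fun h => incomp_ne h
      have hsub : (l.map c) ⊆ L21 := by
        intro x hx
        obtain ⟨a, ha, rfl⟩ := List.mem_map.mp hx
        exact mem_L21 (c a) (hlt a ha) (h2 a ha) (h1 a ha)
      obtain ⟨S, hS1, hS2⟩ := List.subperm_of_subset ND hsub
      have PS : S.Pairwise incomp := (hS1.pairwise_iff (fun h => ⟨h.2, h.1⟩)).mpr PK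
      have hsem0 : SemP (S ++ []) :=
        aux_sound L21 [] aux_true S hS2 (by simpa using PS)
      have hsem : SemP (l.map c) := SemP_perm (by simpa using hS1) hsem0
      obtain ⟨P, M, hpm, d1, d2, d3, d4, d5⟩ := hsem
      obtain ⟨A, B, hab, hA, hB⟩ := lift c l P M hpm
      have key : ∀ j : ℕ, SC c j A = SL j P ∧ SC c j B = SL j M := by
        intro j
        constructor
        · rw [SC_eq_SL]; exact (hA.map (bitw j)).sum_eq
        · rw [SC_eq_SL]; exact (hB.map (bitw j)).sum_eq
      refine ⟨A, B, hab, ?_, ?_, ?_, ?_, ?_⟩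
      · rw [(key 0).1, (key 0).2]; exact d1
      · rw [(key 1).1, (key 1).2]; exact d2
      · rw [(key 2).1, (key 2).2]; exact d3
      · rw [(key 3).1, (key 3).2]; exact d4
      · rw [(key 4).1, (key 4).2]; exact d5

def enc (b0 b1 b2 b3 b4 : Bool) : ℕ :=
  (bif b0 then 1 else 0) + (bif b1 then 2 else 0) + (bif b2 then 4 else 0) +
  (bif b3 then 8 else 0) + (bif b4 then 16 else 0)

theorem enc_lt : ∀ b0 b1 b2 b3 b4, enc b0 b1 b2 b3 b4 < 32 := by decide

theorem enc_bits : ∀ b0 b1 b2 b3 b4 : Bool,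
    bitw 0 (enc b0 b1 b2 b3 b4) = (bif b0 then 1 else 0) ∧
    bitw 1 (enc b0 b1 b2 b3 b4) = (bif b1 then 1 else 0) ∧
    bitw 2 (enc b0 b1 b2 b3 b4) = (bif b2 then 1 else 0) ∧
    bitw 3 (enc b0 b1 b2 b3 b4) = (bif b3 then 1 else 0) ∧
    bitw 4 (enc b0 b1 b2 b3 b4) = (bif b4 then 1 else 0) := by decide

end BinEF1


theorem EF1_of_counts {γ : Type*} [DecidableEq γ] (w : Finset γ → ℝ) (hw : Binary w)
    (b : γ → ℤ) (hb : ∀ g, ((b g : ℤ) : ℝ) = w {g}) (hb01 : ∀ g, b g = 0 ∨ b g = 1)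
    (mine other : Finset γ) (h : ∑ g ∈ other, b g ≤ (∑ g ∈ mine, b g) + 1) :
    EF1 w mine other := by
  have hsum : ∀ T : Finset γ, w T = ((∑ g ∈ T, b g : ℤ) : ℝ) := by
    intro T
    rw [hw.1 T]
    push_cast
    exact Finset.sum_congr rfl fun g _ => (hb g).symm
  by_cases hle : ∑ g ∈ other, b g ≤ ∑ g ∈ mine, b g
  · refine ⟨∅, Finset.empty_subset _, by simp, ?_⟩
    rw [Finset.sdiff_empty, hsum, hsum]
    exact_mod_cast hle
  · push_neg at hle
    have heq : ∑ g ∈ other, b g = (∑ g ∈ mine, b g) + 1 := by omega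
    have hposmine : (0:ℤ) ≤ ∑ g ∈ mine, b g :=
      Finset.sum_nonneg fun g _ => by rcases hb01 g with h'|h' <;> simp [h']
    have hex : ∃ g ∈ other, b g = 1 := by
      by_contra hno
      push_neg at hno
      have : ∑ g ∈ other, b g = 0 := Finset.sum_eq_zero fun g hg => by
        rcases hb01 g with h'|h'
        · exact h'
        · exact absurd h' (hno g hg)
      omega
    obtain ⟨g, hg, hbg⟩ := hex
    refine ⟨{g}, Finset.singleton_subset_iff.mpr hg, by simp, ?_⟩
    rw [hsum, hsum]
    have hsd : (∑ x ∈ other \ {g}, b x) + (∑ x ∈ {g}, b x) = ∑ x ∈ other, b x :=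
      Finset.sum_sdiff (Finset.singleton_subset_iff.mpr hg)
    have : ∑ x ∈ other \ {g}, b x = ∑ g ∈ mine, b g := by
      simp only [Finset.sum_singleton, hbg] at hsd
      omega
    rw [this]

/-- For groups of sizes (3,2) and binary valuations, an EF1 allocation always exists. -/
theorem binary_3_2_EF1 (γ : Type*) [Fintype γ] [DecidableEq γ]
    (u : Fin 3 → Finset γ → ℝ) (v : Fin 2 → Finset γ → ℝ)
    (hu : ∀ j, Binary (u j)) (hv : ∀ j, Binary (v j)) :
    ∃ B₁ B₂ : Finset γ, Disjoint B₁ B₂ ∧ B₁ ∪ B₂ = Finset.univ ∧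
      (∀ j, EF1 (u j) B₁ B₂) ∧ (∀ j, EF1 (v j) B₂ B₁) := by
  classical
  set c : γ → ℕ := fun g => BinEF1.enc (decide (u 0 {g} = 1)) (decide (u 1 {g} = 1))
    (decide (u 2 {g} = 1)) (decide (v 0 {g} = 1)) (decide (v 1 {g} = 1)) with hc
  obtain ⟨A, B, hab, c0, c1, c2, c3, c4⟩ :=
    BinEF1.main c (Finset.univ.toList (α := γ)).length (Finset.univ.toList) le_rfl
      (fun a _ => BinEF1.enc_lt _ _ _ _ _)
  have hnd : (A ++ B).Nodup := hab.nodup_iff.mpr (Finset.nodup_toList _)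
  obtain ⟨ndA, ndB, hdisj⟩ := List.nodup_append.mp hnd
  -- the bit value of each good matches the valuations
  have hbitu : ∀ (j : Fin 3) (g : γ), ((BinEF1.bitw j.val (c g) : ℤ) : ℝ) = u j {g} := by
    intro j g
    have hb := BinEF1.enc_bits (decide (u 0 {g} = 1)) (decide (u 1 {g} = 1))
      (decide (u 2 {g} = 1)) (decide (v 0 {g} = 1)) (decide (v 1 {g} = 1))
    fin_cases j
    · rw [hc]
      show ((BinEF1.bitw 0 _ : ℤ) : ℝ) = u 0 {g}
      rw [hb.1]
      rcases (hu 0).2 g with h'|h'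
      · rw [h']; simp [decide_eq_false (by rw [h']; norm_num : ¬ (u 0 {g} = 1))]
      · rw [h']; simp [decide_eq_true h']
    · rw [hc]
      show ((BinEF1.bitw 1 _ : ℤ) : ℝ) = u 1 {g}
      rw [hb.2.1]
      rcases (hu 1).2 g with h'|h'
      · rw [h']; simp [decide_eq_false (by rw [h']; norm_num : ¬ (u 1 {g} = 1))]
      · rw [h']; simp [decide_eq_true h']
    · rw [hc]
      show ((BinEF1.bitw 2 _ : ℤ) : ℝ) = u 2 {g}
      rw [hb.2.2.1]
      rcases (hu 2).2 g with h'|h'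
      · rw [h']; simp [decide_eq_false (by rw [h']; norm_num : ¬ (u 2 {g} = 1))]
      · rw [h']; simp [decide_eq_true h']
  have hbitv : ∀ (k : Fin 2) (g : γ), ((BinEF1.bitw (3 + k.val) (c g) : ℤ) : ℝ) = v k {g} := by
    intro k g
    have hb := BinEF1.enc_bits (decide (u 0 {g} = 1)) (decide (u 1 {g} = 1))
      (decide (u 2 {g} = 1)) (decide (v 0 {g} = 1)) (decide (v 1 {g} = 1))
    fin_cases k
    · rw [hc]
      show ((BinEF1.bitw 3 _ : ℤ) : ℝ) = v 0 {g}
      rw [hb.2.2.2.1]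
      rcases (hv 0).2 g with h'|h'
      · rw [h']; simp [decide_eq_false (by rw [h']; norm_num : ¬ (v 0 {g} = 1))]
      · rw [h']; simp [decide_eq_true h']
    · rw [hc]
      show ((BinEF1.bitw 4 _ : ℤ) : ℝ) = v 1 {g}
      rw [hb.2.2.2.2]
      rcases (hv 1).2 g with h'|h'
      · rw [h']; simp [decide_eq_false (by rw [h']; norm_num : ¬ (v 1 {g} = 1))]
      · rw [h']; simp [decide_eq_true h']
  have hsumA : ∀ i : ℕ, (∑ g ∈ A.toFinset, BinEF1.bitw i (c g)) = BinEF1.SC c i A :=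
    fun i => List.sum_toFinset _ ndA
  have hsumB : ∀ i : ℕ, (∑ g ∈ B.toFinset, BinEF1.bitw i (c g)) = BinEF1.SC c i B :=
    fun i => List.sum_toFinset _ ndB
  refine ⟨A.toFinset, B.toFinset, ?_, ?_, ?_, ?_⟩
  · rw [Finset.disjoint_left]
    intro g hgA hgB
    exact hdisj _ (List.mem_toFinset.mp hgA) _ (List.mem_toFinset.mp hgB) rfl
  · apply Finset.eq_univ_iff_forall.mpr
    intro g
    have : g ∈ A ++ B := hab.mem_iff.mpr (by simp [Finset.mem_toList])
    rcases List.mem_append.mp this with h' | h'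
    · exact Finset.mem_union_left _ (List.mem_toFinset.mpr h')
    · exact Finset.mem_union_right _ (List.mem_toFinset.mpr h')
  · intro j
    refine EF1_of_counts (u j) (hu j) (fun g => BinEF1.bitw j.val (c g)) (hbitu j)
      (fun g => BinEF1.bitw_01 _ _) _ _ ?_
    rw [hsumA j.val, hsumB j.val]
    fin_cases j
    · show BinEF1.SC c 0 B ≤ BinEF1.SC c 0 A + 1; linarith
    · show BinEF1.SC c 1 B ≤ BinEF1.SC c 1 A + 1; linarith
    · show BinEF1.SC c 2 B ≤ BinEF1.SC c 2 A + 1; linarith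
  · intro k
    refine EF1_of_counts (v k) (hv k) (fun g => BinEF1.bitw (3 + k.val) (c g)) (hbitv k)
      (fun g => BinEF1.bitw_01 _ _) _ _ ?_
    rw [hsumA (3 + k.val), hsumB (3 + k.val)]
    fin_cases k
    · show BinEF1.SC c 3 A ≤ BinEF1.SC c 3 B + 1; linarith
    · show BinEF1.SC c 4 A ≤ BinEF1.SC c 4 B + 1; linarith
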